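/- Every narrow partially ordered set is a finite union of directed subsets. -/

import Mathlib

open Set

/-- A poset is narrow if it contains no infinite set of pairwise incomparable elements. -/
def IsNarrow (P : Type*) [PartialOrder P] : Prop :=
  ∀ A : Set P, (∀ a ∈ A, ∀ b ∈ A, a ≠ b → ¬a ≤ b ∧ ¬b ≤ a) → A.Finite

/-- Lemma 4.3: every narrow poset is a finite union of directed subsets. -/
theorem narrow_finite_union_of_directed {P : Type*} [PartialOrder P] (hP : IsNarrow P) :
    ∃ (n : ℕ) (D : Fin n → Set P),
      (∀ i, DirectedOn (· ≤ ·) (D i)) ∧ (⋃ i, D i) = Set.univ := by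
  by_contra hcon
  push_neg at hcon
  -- `S` : the family of sets coverable by finitely many directed sets.
  set S : Set (Set P) :=
    {A | ∃ 𝒟 : Set (Set P), 𝒟.Finite ∧ (∀ E ∈ 𝒟, DirectedOn (· ≤ ·) E) ∧ A ⊆ ⋃₀ 𝒟}
    with hSdef
  have hSuniv : (univ : Set P) ∉ S := by
    rintro ⟨𝒟, hfin, hdir, hcov⟩
    set l := hfin.toFinset.toList with hl
    have hmeml : ∀ E : Set P, E ∈ l ↔ E ∈ 𝒟 := by
      intro E
      rw [hl, Finset.mem_toList, Set.Finite.mem_toFinset]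
    refine hcon l.length (fun i => l.get i) ?_ ?_
    · intro i
      exact hdir _ ((hmeml _).mp (l.get_mem _))
    · apply eq_univ_of_univ_subset
      intro x hx
      obtain ⟨E, hE𝒟, hxE⟩ := hcov (mem_univ x)
      obtain ⟨i, hi⟩ := List.mem_iff_get.mp ((hmeml E).mpr hE𝒟)
      exact mem_iUnion.mpr ⟨i, by rw [hi]; exact hxE⟩
  have hmono : ∀ {A B : Set P}, A ⊆ B → B ∈ S → A ∈ S := by
    rintro A B hAB ⟨𝒟, hfin, hdir, hcov⟩
    exact ⟨𝒟, hfin, hdir, hAB.trans hcov⟩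
  have hunion : ∀ {A B : Set P}, A ∈ S → B ∈ S → A ∪ B ∈ S := by
    rintro A B ⟨𝒟₁, h1, d1, c1⟩ ⟨𝒟₂, h2, d2, c2⟩
    refine ⟨𝒟₁ ∪ 𝒟₂, h1.union h2, ?_, ?_⟩
    · rintro E (hE | hE)
      exacts [d1 E hE, d2 E hE]
    · rw [sUnion_union]
      exact union_subset_union c1 c2
  have hempty : (∅ : Set P) ∈ S := ⟨∅, finite_empty, by simp, by simp⟩
  have hdownS : ∀ a : P, {x : P | x ≤ a} ∈ S := by
    intro a
    refine ⟨{{x : P | x ≤ a}}, finite_singleton _, ?_, by rw [sUnion_singleton]⟩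
    intro E hE
    rw [mem_singleton_iff] at hE
    subst hE
    intro x hx y hy
    exact ⟨a, le_refl a, hx, hy⟩
  -- the filter of complements of sets in `S`
  let F : Filter P :=
    { sets := {X | Xᶜ ∈ S}
      univ_sets := by simpa using hempty
      sets_of_superset := fun hX hXY => hmono (compl_subset_compl.mpr hXY) hX
      inter_sets := fun hX hY => by
        simp only [mem_setOf_eq, compl_inter] at *
        exact hunion hX hY }
  have hFmem : ∀ {X : Set P}, Xᶜ ∈ S → X ∈ F := fun h => h
  haveI hFne : F.NeBot := by
    rw [Filter.neBot_iff]
    intro hbot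
    have h1 : (∅ : Set P) ∈ F := Filter.empty_mem_iff_bot.mpr hbot
    have h2 : (∅ : Set P)ᶜ ∈ S := h1
    rw [compl_empty] at h2
    exact hSuniv h2
  set U : Ultrafilter P := Ultrafilter.of F with hUdef
  have hUF : ∀ {X : Set P}, X ∈ F → X ∈ U := fun h => Ultrafilter.of_le F h
  have hUS : ∀ {A : Set P}, A ∈ S → A ∉ U := by
    intro A hA hAU
    have h1 : Aᶜ ∈ U := hUF (show Aᶜᶜ ∈ S by rwa [compl_compl])
    exact Ultrafilter.compl_mem_iff_notMem.mp h1 hAU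
  set T : Set P := {a : P | {x : P | a ≤ x} ∈ U} with hTdef
  by_cases hT : T ∈ U
  · -- `T` is directed, so `T ∈ S`, contradicting `T ∈ U`.
    refine hUS ?_ hT
    refine ⟨{T}, finite_singleton _, ?_, by rw [sUnion_singleton]⟩
    intro E hE
    rw [mem_singleton_iff] at hE
    subst hE
    intro a ha b hb
    have hmem : ({x : P | a ≤ x} ∩ {x : P | b ≤ x} ∩ T) ∈ U :=
      Filter.inter_mem (Filter.inter_mem ha hb) hT
    obtain ⟨c, ⟨⟨hac, hbc⟩, hcT⟩⟩ := Ultrafilter.nonempty_of_mem hmem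
    exact ⟨c, hcT, hac, hbc⟩
  · have hTc : Tᶜ ∈ U := Ultrafilter.compl_mem_iff_notMem.mpr hT
    -- a maximal pairwise-incomparable subset of `Tᶜ`
    obtain ⟨A, hAmax⟩ := zorn_subset
      {A : Set P | A ⊆ Tᶜ ∧ ∀ a ∈ A, ∀ b ∈ A, a ≠ b → ¬a ≤ b ∧ ¬b ≤ a} (by
        intro c hcsub hchain
        refine ⟨⋃₀ c, ⟨?_, ?_⟩, fun s hs => subset_sUnion_of_mem hs⟩
        · exact sUnion_subset fun X hX => (hcsub hX).1
        · rintro a ⟨X, hXc, haX⟩ b ⟨Y, hYc, hbY⟩ hab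
          rcases eq_or_ne X Y with rfl | hXY
          · exact (hcsub hXc).2 a haX b hbY hab
          · rcases hchain hXc hYc hXY with h | h
            · exact (hcsub hYc).2 a (h haX) b hbY hab
            · exact (hcsub hXc).2 a haX b (h hbY) hab)
    have hAmem := hAmax.prop
    have hAfin : A.Finite := hP A hAmem.2
    -- `Tᶜ` is covered by the comparability cones of elements of `A`.
    have hcover : Tᶜ ⊆ ⋃ a ∈ A, ({x : P | x ≤ a} ∪ {x : P | a ≤ x}) := by
      intro x hx
      by_contra hxnot
      simp only [mem_iUnion, mem_union, mem_setOf_eq, not_exists, not_or] at hxnot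
      have hxA : x ∉ A := by
        intro hxA
        exact (hxnot x hxA).1 le_rfl
      have hins : insert x A ∈
          {A : Set P | A ⊆ Tᶜ ∧ ∀ a ∈ A, ∀ b ∈ A, a ≠ b → ¬a ≤ b ∧ ¬b ≤ a} := by
        constructor
        · exact insert_subset hx hAmem.1
        · rintro a (rfl | haA) b (rfl | hbA) hab
          · exact absurd rfl hab
          · exact hxnot b hbA
          · exact ⟨(hxnot a haA).2, (hxnot a haA).1⟩
          · exact hAmem.2 a haA b hbA hab
      have := hAmax.eq_of_subset hins (subset_insert x A)
      exact hxA (this ▸ mem_insert x A)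
    have hbig : (⋃ a ∈ A, ({x : P | x ≤ a} ∪ {x : P | a ≤ x})) ∈ U :=
      Filter.mem_of_superset hTc hcover
    obtain ⟨a, haA, haU⟩ := (Ultrafilter.finite_biUnion_mem_iff hAfin).mp hbig
    rcases Ultrafilter.union_mem_iff.mp haU with h | h
    · exact hUS (hdownS a) h
    · exact hAmem.1 haA h
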